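/- For positive integers a and b, the integral of ((ax))((bx)) over [0,1] equals gcd(a,b)^2/(12ab), where ((x)) denotes the first Bernoulli (sawtooth) function. -/

import Mathlib

open Real

/-- The sawtooth (first Bernoulli) function `((x))`. -/
noncomputable def saw (x : ℝ) : ℝ := if Int.fract x = 0 then 0 else Int.fract x - 1/2

open MeasureTheory intervalIntegral Finset

lemma measurable_saw : Measurable saw := by
  unfold saw
  exact Measurable.ite (measurableSet_eq_fun measurable_fract measurable_const)
    measurable_const (measurable_fract.sub measurable_const)

lemma saw_abs_le (x : ℝ) : |saw x| ≤ 1 := by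
  unfold saw
  split
  · simp
  · have h1 := Int.fract_nonneg x
    have h2 := Int.fract_lt_one x
    rw [abs_le]
    constructor <;> linarith

lemma saw_intervalIntegrable (c₁ c₂ l u : ℝ) :
    IntervalIntegrable (fun x => saw (c₁ * x) * saw (c₂ * x)) volume l u := by
  apply IntervalIntegrable.mono_fun' (g := fun _ => (1 : ℝ)) intervalIntegrable_const
  · exact ((measurable_saw.comp (measurable_const_mul c₁)).mul
      (measurable_saw.comp (measurable_const_mul c₂))).aestronglyMeasurable
  · filter_upwards with x
    have := abs_mul (saw (c₁ * x)) (saw (c₂ * x))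
    have h1 := saw_abs_le (c₁ * x)
    have h2 := saw_abs_le (c₂ * x)
    have h3 : |saw (c₁ * x)| * |saw (c₂ * x)| ≤ 1 * 1 :=
      mul_le_mul h1 h2 (abs_nonneg _) zero_le_one
    simpa [Real.norm_eq_abs, this] using h3

lemma saw_add_nat (y : ℝ) (n : ℕ) : saw (y + n) = saw y := by
  unfold saw
  rw [Int.fract_add_natCast]

lemma saw_eq_of_between {y : ℝ} {p : ℕ} (h1 : (p : ℝ) < y) (h2 : y < p + 1) :
    saw y = y - p - 1/2 := by
  have hfl : ⌊y⌋ = (p : ℤ) := by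
    rw [Int.floor_eq_iff]
    constructor
    · exact_mod_cast h1.le
    · push_cast
      exact h2
  have hfr : Int.fract y = y - p := by
    rw [Int.fract, hfl]
    push_cast
    ring
  have hne : Int.fract y ≠ 0 := by
    rw [hfr]; linarith
  rw [saw, if_neg hne, hfr]

lemma integral_quadratic (A B C l u : ℝ) :
    ∫ x in l..u, (A * x ^ 2 + B * x + C) =
      A * (u ^ 3 - l ^ 3) / 3 + B * (u ^ 2 - l ^ 2) / 2 + C * (u - l) := by
  have h : ∀ x ∈ Set.uIcc l u,
      HasDerivAt (fun x => A * x ^ 3 / 3 + B * x ^ 2 / 2 + C * x) (A * x ^ 2 + B * x + C) x := by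
    intro x _
    have hx : HasDerivAt (fun x : ℝ => A * x ^ 3 / 3 + B * x ^ 2 / 2 + C * x)
        (A * (3 * x ^ 2) / 3 + B * (2 * x ^ 1) / 2 + C * 1) x := by
      exact ((((hasDerivAt_pow 3 x).const_mul A).div_const 3).add
        (((hasDerivAt_pow 2 x).const_mul B).div_const 2)).add ((hasDerivAt_id x).const_mul C)
    convert hx using 1
    ring
  rw [intervalIntegral.integral_eq_sub_of_hasDerivAt h (by
    apply Continuous.intervalIntegrable; continuity)]
  ring

set_option maxHeartbeats 1000000 in
/-- Key per-interval computation. -/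
lemma key_interval (a b k : ℕ) (ha : 0 < a) (hb : 0 < b) :
    ∫ x in ((k : ℝ) / (a * b))..(((k : ℝ) + 1) / (a * b)), saw (a * x) * saw (b * x) =
      (((k % b : ℕ) : ℝ) / b - ((b : ℝ) - 1) / (2 * b)) *
        (((k % a : ℕ) : ℝ) / a - ((a : ℝ) - 1) / (2 * a)) / (a * b) +
        1 / (12 * ((a : ℝ) * b) ^ 2) := by
  have haR : (0 : ℝ) < a := by exact_mod_cast ha
  have hbR : (0 : ℝ) < b := by exact_mod_cast hb
  have hab : (0 : ℝ) < (a : ℝ) * b := mul_pos haR hbR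
  set l : ℝ := (k : ℝ) / (a * b) with hl
  set u : ℝ := ((k : ℝ) + 1) / (a * b) with hu
  have hlu : l ≤ u := by
    rw [hl, hu]
    gcongr
    linarith
  -- the polynomial that agrees with the integrand on (l, u)
  set p : ℕ := k / b with hp
  set q : ℕ := k / a with hq
  have hkb : (k : ℝ) = b * p + (k % b : ℕ) := by
    rw [hp]; exact_mod_cast (congrArg (Nat.cast (R := ℝ)) (Nat.div_add_mod k b).symm)
  have hka : (k : ℝ) = a * q + (k % a : ℕ) := by
    rw [hq]; exact_mod_cast (congrArg (Nat.cast (R := ℝ)) (Nat.div_add_mod k a).symm)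
  have hmodb : (k % b : ℕ) < b := Nat.mod_lt _ hb
  have hmoda : (k % a : ℕ) < a := Nat.mod_lt _ ha
  have hcong : ∀ x ∈ Set.Ioo l u,
      saw (a * x) * saw (b * x) = ((a : ℝ) * x - p - 1/2) * ((b : ℝ) * x - q - 1/2) := by
    intro x hx
    obtain ⟨hx1, hx2⟩ := hx
    have hk3 : (k : ℝ) < a * b * x := by
      rw [div_lt_iff₀ hab] at hx1
      nlinarith
    have hk4 : (a : ℝ) * b * x < (k : ℝ) + 1 := by
      have h := hx2
      rw [hu, lt_div_iff₀ hab] at h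
      nlinarith
    have hax1 : (p : ℝ) < (a : ℝ) * x := by
      have h1 : (p : ℝ) * b ≤ k := by nlinarith [(Nat.cast_nonneg (k % b) : (0:ℝ) ≤ _), hkb]
      rw [← mul_lt_mul_iff_left₀ hbR]
      nlinarith
    have hax2 : (a : ℝ) * x < p + 1 := by
      have h1 : (k : ℝ) + 1 ≤ b * (p + 1) := by
        have : ((k % b : ℕ) : ℝ) + 1 ≤ b := by exact_mod_cast hmodb
        rw [hkb]; linarith
      rw [← mul_lt_mul_iff_left₀ hbR]
      nlinarith
    have hbx1 : (q : ℝ) < (b : ℝ) * x := by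
      have h1 : (q : ℝ) * a ≤ k := by nlinarith [(Nat.cast_nonneg (k % a) : (0:ℝ) ≤ _), hka]
      rw [← mul_lt_mul_iff_left₀ haR]
      nlinarith
    have hbx2 : (b : ℝ) * x < q + 1 := by
      have h1 : (k : ℝ) + 1 ≤ a * (q + 1) := by
        have : ((k % a : ℕ) : ℝ) + 1 ≤ a := by exact_mod_cast hmoda
        rw [hka]; linarith
      rw [← mul_lt_mul_iff_left₀ haR]
      nlinarith
    rw [saw_eq_of_between hax1 hax2, saw_eq_of_between hbx1 hbx2]
  have hstep : ∫ x in l..u, saw (a * x) * saw (b * x)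
      = ∫ x in l..u, (((a : ℝ) * b) * x ^ 2
          + (-((a : ℝ) * (q + 1/2) + (b : ℝ) * (p + 1/2))) * x
          + ((p : ℝ) + 1/2) * ((q : ℝ) + 1/2)) := by
    apply intervalIntegral.integral_congr_ae
    have hne : ∀ᵐ x : ℝ, x ≠ u := by
      rw [MeasureTheory.ae_iff]
      have : {x : ℝ | ¬ x ≠ u} = {u} := by ext y; simp
      rw [this]
      exact measure_singleton u
    filter_upwards [hne] with x hx hmem
    rw [Set.uIoc_of_le hlu] at hmem
    have hx2 : x < u := lt_of_le_of_ne hmem.2 hx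
    rw [hcong x ⟨hmem.1, hx2⟩]
    ring
  rw [hstep, integral_quadratic]
  have h1 : ((k % b : ℕ) : ℝ) = k - b * p := by linarith [hkb]
  have h2 : ((k % a : ℕ) : ℝ) = k - a * q := by linarith [hka]
  rw [hl, hu, h1, h2]
  field_simp
  ring

lemma sum_mod_crt (a b : ℕ) (ha : 0 < a) (hb : 0 < b) (hco : Nat.Coprime a b) (f : ℕ → ℕ → ℝ) :
    ∑ k ∈ range (a * b), f (k % a) (k % b) = ∑ s ∈ range a, ∑ r ∈ range b, f s r := by
  rw [← Finset.sum_product']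
  apply Finset.sum_nbij' (i := fun k => (k % a, k % b))
    (j := fun st => ((Nat.chineseRemainder hco st.1 st.2 : ℕ) % (a * b)))
  · intro k hk
    simp only [Finset.mem_product, Finset.mem_range]
    exact ⟨Nat.mod_lt _ ha, Nat.mod_lt _ hb⟩
  · intro st hst
    simp only [Finset.mem_range]
    exact Nat.mod_lt _ (Nat.mul_pos ha hb)
  · intro k hk
    simp only [Finset.mem_range] at hk
    have h := (Nat.chineseRemainder hco (k % a) (k % b)).2
    have h1 : (Nat.chineseRemainder hco (k % a) (k % b) : ℕ) ≡ k [MOD a] :=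
      h.1.trans (Nat.mod_modEq k a)
    have h2 : (Nat.chineseRemainder hco (k % a) (k % b) : ℕ) ≡ k [MOD b] :=
      h.2.trans (Nat.mod_modEq k b)
    have h3 : (Nat.chineseRemainder hco (k % a) (k % b) : ℕ) ≡ k [MOD a * b] :=
      (Nat.modEq_and_modEq_iff_modEq_mul hco).mp ⟨h1, h2⟩
    have h4 : (Nat.chineseRemainder hco (k % a) (k % b) : ℕ) % (a * b) = k % (a * b) := h3
    simpa [Nat.mod_eq_of_lt hk] using h4
  · intro st hst
    simp only [Finset.mem_product, Finset.mem_range] at hst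
    have h := (Nat.chineseRemainder hco st.1 st.2).2
    have h1 : (Nat.chineseRemainder hco st.1 st.2 : ℕ) % (a * b) % a = st.1 := by
      rw [Nat.mod_mod_of_dvd _ (Dvd.intro b rfl)]
      have h' : (Nat.chineseRemainder hco st.1 st.2 : ℕ) % a = st.1 % a := h.1
      rwa [Nat.mod_eq_of_lt hst.1] at h'
    have h2 : (Nat.chineseRemainder hco st.1 st.2 : ℕ) % (a * b) % b = st.2 := by
      rw [Nat.mod_mod_of_dvd _ (Dvd.intro_left a rfl)]
      have h' : (Nat.chineseRemainder hco st.1 st.2 : ℕ) % b = st.2 % b := h.2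
      rwa [Nat.mod_eq_of_lt hst.2] at h'
    rw [h1, h2]
  · intro k hk
    rfl

lemma sum_centered (n : ℕ) (hn : 0 < n) :
    ∑ r ∈ range n, ((r : ℝ) / n - ((n : ℝ) - 1) / (2 * n)) = 0 := by
  have hnR : (0 : ℝ) < n := by exact_mod_cast hn
  have hsum : ∀ m : ℕ, ∑ r ∈ range m, (r : ℝ) = m * ((m : ℝ) - 1) / 2 := by
    intro m
    induction m with
    | zero => simp
    | succ m ih =>
      rw [Finset.sum_range_succ, ih]
      push_cast
      ring
  rw [Finset.sum_sub_distrib, ← Finset.sum_div, hsum n, Finset.sum_const, Finset.card_range]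
  field_simp
  rw [nsmul_eq_mul]
  field_simp
  ring

lemma coprime_case (a b : ℕ) (ha : 0 < a) (hb : 0 < b) (hco : Nat.Coprime a b) :
    ∫ x in (0:ℝ)..1, saw (a * x) * saw (b * x) = 1 / (12 * a * b) := by
  have haR : (0 : ℝ) < a := by exact_mod_cast ha
  have hbR : (0 : ℝ) < b := by exact_mod_cast hb
  have habn : 0 < a * b := Nat.mul_pos ha hb
  have habR : (0 : ℝ) < (a : ℝ) * b := mul_pos haR hbR
  have hpart := intervalIntegral.sum_integral_adjacent_intervals
    (f := fun x => saw (a * x) * saw (b * x)) (μ := volume)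
    (a := fun k : ℕ => (k : ℝ) / (a * b)) (n := a * b)
    (fun k _ => saw_intervalIntegrable _ _ _ _)
  have h0 : ((0 : ℕ) : ℝ) / ((a : ℝ) * b) = 0 := by simp
  have h1 : ((a * b : ℕ) : ℝ) / ((a : ℝ) * b) = 1 := by
    push_cast
    field_simp
  simp only [h0, h1] at hpart
  rw [← hpart]
  have hterm : ∀ k ∈ range (a * b),
      (∫ x in ((k : ℝ) / (a * b))..(((k + 1 : ℕ) : ℝ) / (a * b)), saw (a * x) * saw (b * x))
      = (((k % b : ℕ) : ℝ) / b - ((b : ℝ) - 1) / (2 * b)) *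
          ((((k % a : ℕ) : ℝ) / a - ((a : ℝ) - 1) / (2 * a)) / ((a : ℝ) * b)) +
          1 / (12 * ((a : ℝ) * b) ^ 2) := by
    intro k _
    have := key_interval a b k ha hb
    rw [show (((k + 1 : ℕ) : ℝ) / ((a : ℝ) * b)) = ((k : ℝ) + 1) / ((a : ℝ) * b) by push_cast; ring]
    rw [this]
    ring
  rw [Finset.sum_congr rfl hterm]
  rw [sum_mod_crt a b ha hb hco (fun s r =>
      ((r : ℝ) / b - ((b : ℝ) - 1) / (2 * b)) *
        (((s : ℝ) / a - ((a : ℝ) - 1) / (2 * a)) / ((a : ℝ) * b)) +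
        1 / (12 * ((a : ℝ) * b) ^ 2))]
  have hinner : ∀ s : ℕ, ∑ r ∈ range b,
      (((r : ℝ) / b - ((b : ℝ) - 1) / (2 * b)) *
        (((s : ℝ) / a - ((a : ℝ) - 1) / (2 * a)) / ((a : ℝ) * b)) +
        1 / (12 * ((a : ℝ) * b) ^ 2))
      = (b : ℝ) * (1 / (12 * ((a : ℝ) * b) ^ 2)) := by
    intro s
    rw [Finset.sum_add_distrib, ← Finset.sum_mul, sum_centered b hb, zero_mul, zero_add,
      Finset.sum_const, Finset.card_range, nsmul_eq_mul]
  rw [Finset.sum_congr rfl (fun s _ => hinner s), Finset.sum_const, Finset.card_range,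
    nsmul_eq_mul]
  field_simp

theorem franel_integral (a b : ℕ) (ha : 0 < a) (hb : 0 < b) :
    ∫ x in (0:ℝ)..1, saw (a * x) * saw (b * x) = (Nat.gcd a b : ℝ)^2 / (12 * a * b) := by
  set d : ℕ := Nat.gcd a b with hd
  have hdpos : 0 < d := Nat.gcd_pos_of_pos_left b ha
  set a₁ : ℕ := a / d with ha₁
  set b₁ : ℕ := b / d with hb₁
  have hda : d * a₁ = a := Nat.mul_div_cancel' (Nat.gcd_dvd_left a b)
  have hdb : d * b₁ = b := Nat.mul_div_cancel' (Nat.gcd_dvd_right a b)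
  have ha₁pos : 0 < a₁ := by
    rcases Nat.eq_zero_or_pos a₁ with h | h
    · rw [h, mul_zero] at hda; omega
    · exact h
  have hb₁pos : 0 < b₁ := by
    rcases Nat.eq_zero_or_pos b₁ with h | h
    · rw [h, mul_zero] at hdb; omega
    · exact h
  have hco : Nat.Coprime a₁ b₁ := Nat.coprime_div_gcd_div_gcd hdpos
  have hdR : (0 : ℝ) < d := by exact_mod_cast hdpos
  have haR : ((a : ℕ) : ℝ) = (d : ℝ) * a₁ := by exact_mod_cast hda.symm
  have hbR : ((b : ℕ) : ℝ) = (d : ℝ) * b₁ := by exact_mod_cast hdb.symm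
  -- periodicity of F
  set F : ℝ → ℝ := fun y => saw (a₁ * y) * saw (b₁ * y) with hF
  have hper : Function.Periodic F 1 := by
    intro y
    have e1 : (a₁ : ℝ) * (y + 1) = (a₁ : ℝ) * y + (a₁ : ℕ) := by ring
    have e2 : (b₁ : ℝ) * (y + 1) = (b₁ : ℝ) * y + (b₁ : ℕ) := by ring
    rw [hF]
    simp only
    rw [e1, e2, saw_add_nat, saw_add_nat]
  have hint : ∀ t₁ t₂ : ℝ, IntervalIntegrable F volume t₁ t₂ := fun t₁ t₂ =>
    saw_intervalIntegrable _ _ _ _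
  have step1 : ∫ x in (0:ℝ)..1, saw (a * x) * saw (b * x)
      = ∫ x in (0:ℝ)..1, F ((d : ℝ) * x) := by
    apply intervalIntegral.integral_congr
    intro x _
    rw [hF]
    simp only
    rw [haR, hbR]
    ring_nf
  have step2 : ∫ x in (0:ℝ)..1, F ((d : ℝ) * x) = (d : ℝ)⁻¹ • ∫ x in (0:ℝ)..(d : ℝ), F x := by
    rw [intervalIntegral.integral_comp_mul_left F (ne_of_gt hdR)]
    norm_num
  have step3 : ∫ x in (0:ℝ)..(d : ℝ), F x = (d : ℤ) • ∫ x in (0:ℝ)..1, F x := by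
    have := hper.intervalIntegral_add_zsmul_eq (d : ℤ) 0 hint
    simpa using this
  have step4 : ∫ x in (0:ℝ)..1, F x = 1 / (12 * a₁ * b₁) :=
    coprime_case a₁ b₁ ha₁pos hb₁pos hco
  rw [step1, step2, step3, step4]
  rw [haR, hbR]
  have ha₁R : (0 : ℝ) < a₁ := by exact_mod_cast ha₁pos
  have hb₁R : (0 : ℝ) < b₁ := by exact_mod_cast hb₁pos
  simp only [smul_eq_mul, zsmul_eq_mul, Int.cast_natCast]
  field_simp
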